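/- Let Cat₀ = {x ∈ ℝ³ : cosh²(x₃) = x₁² + x₂², |x₃| < t₀} where cosh(t₀) = t₀·sinh(t₀), and let N_{θ₀} = {x ∈ ℝ³ : x₃² < |x|²·sin²θ₀} ∖ {0} be the open solid double cone with sin²θ₀ = t₀²/(t₀² + cosh²t₀). Then the dilations {λ·Cat₀ : λ > 0} are pairwise disjoint and their union equals N_{θ₀}. Consequently, there is a well-defined function f : N_{θ₀} → (0,∞) such that x/f(x) ∈ Cat₀ for all x ∈ N_{θ₀}, and f(λx) = λ·f(x) for all λ > 0. -/

import Mathlib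

open Real Set Pointwise

abbrev R3 := EuclideanSpace ℝ (Fin 3)

/-- The middle portion `Cat₀` of the standard vertical catenoid: the points with
`|x₃| < t₀`. -/
def Cat0 (t₀ : ℝ) : Set R3 :=
  {x | Real.cosh (x 2) ^ 2 = x 0 ^ 2 + x 1 ^ 2 ∧ |x 2| < t₀}

/-- The open solid double cone `N_{θ₀}` (with the origin removed), where
`sin²θ₀ = t₀²/(t₀² + cosh²t₀)`. -/
def solidCone (t₀ : ℝ) : Set R3 :=
  {x | x ≠ 0 ∧ (x 2) ^ 2 < ‖x‖ ^ 2 * (t₀ ^ 2 / (t₀ ^ 2 + Real.cosh t₀ ^ 2))}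


lemma tangent_line {t₀ s : ℝ} (hs : s < t₀) :
    Real.cosh t₀ + Real.sinh t₀ * (s - t₀) < Real.cosh s := by
  obtain ⟨c, hc, hceq⟩ := exists_hasDerivAt_eq_slope Real.cosh Real.sinh hs
    Real.continuous_cosh.continuousOn (fun x _ => Real.hasDerivAt_cosh x)
  have h1 : Real.sinh c < Real.sinh t₀ := Real.sinh_lt_sinh.mpr hc.2
  rw [hceq] at h1
  rw [div_lt_iff₀ (by linarith)] at h1
  nlinarith

lemma key1 {t₀ s : ℝ} (heq : Real.cosh t₀ = t₀ * Real.sinh t₀) (hs : s < t₀) :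
    s * Real.sinh t₀ < Real.cosh s := by
  have := tangent_line hs
  nlinarith

lemma key2 {t₀ s : ℝ} (heq : Real.cosh t₀ = t₀ * Real.sinh t₀) (hs0 : 0 ≤ s)
    (hs : s < t₀) : s * Real.sinh s < Real.cosh s :=
  lt_of_le_of_lt (mul_le_mul_of_nonneg_left (Real.sinh_le_sinh.mpr hs.le) hs0) (key1 heq hs)

lemma norm_sq3 (x : R3) : ‖x‖ ^ 2 = x 0 ^ 2 + x 1 ^ 2 + x 2 ^ 2 := by
  rw [EuclideanSpace.norm_eq, Real.sq_sqrt (by positivity)]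
  simp [Fin.sum_univ_three, sq_abs]

lemma F_strictMono {t₀ : ℝ} (ht₀ : 0 < t₀) (heq : Real.cosh t₀ = t₀ * Real.sinh t₀)
    (z : ℝ) : StrictMonoOn (fun l => l * Real.cosh (z / l)) (Ioi (|z| / t₀)) := by
  have hpos : ∀ l ∈ Ioi (|z| / t₀), 0 < l := fun l hl =>
    lt_of_le_of_lt (div_nonneg (abs_nonneg z) ht₀.le) hl
  apply strictMonoOn_of_deriv_pos (convex_Ioi _)
  · exact continuousOn_id.mul (Real.continuous_cosh.comp_continuousOn
      (continuousOn_const.div continuousOn_id (fun l hl => (hpos l hl).ne')))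
  · intro l hl
    rw [interior_Ioi] at hl
    have hl0 : 0 < l := hpos l hl
    have hd : HasDerivAt (fun l => l * Real.cosh (z / l))
        (1 * Real.cosh (z / l) + l * (Real.sinh (z / l) * ((0 * l - z * 1) / l ^ 2))) l := by
      exact (hasDerivAt_id l).mul ((Real.hasDerivAt_cosh (z / l)).comp l
        ((hasDerivAt_const l z).div (hasDerivAt_id l) hl0.ne'))
    rw [hd.deriv]
    have hl' : |z| < l * t₀ := by
      have := mem_Ioi.mp hl
      rw [div_lt_iff₀ ht₀] at this
      linarith
    have habs : |z / l| < t₀ := by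
      rw [abs_div, abs_of_pos hl0, div_lt_iff₀ hl0]
      linarith
    have h2 : (z / l) * Real.sinh (z / l) < Real.cosh (z / l) := by
      have := key2 heq (abs_nonneg (z / l)) habs
      rw [Real.cosh_abs] at this
      rcases le_or_gt 0 (z / l) with h | h
      · rwa [abs_of_nonneg h] at this
      · rw [abs_of_neg h, Real.sinh_neg] at this
        nlinarith
    have heval : 1 * Real.cosh (z / l) + l * (Real.sinh (z / l) * ((0 * l - z * 1) / l ^ 2))
        = Real.cosh (z / l) - (z / l) * Real.sinh (z / l) := by
      field_simp
      ring
    rw [heval]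
    linarith

lemma F_exists {t₀ z r : ℝ} (ht₀ : 0 < t₀) (hr : |z| * Real.cosh t₀ < r * t₀) :
    ∃ l, |z| / t₀ < l ∧ l * Real.cosh (z / l) = r := by
  have hc1 : (1 : ℝ) ≤ Real.cosh t₀ := Real.one_le_cosh t₀
  have hr0 : 0 < r := by nlinarith [abs_nonneg z]
  set a := |z| / t₀ with ha
  have ha0 : 0 ≤ a := div_nonneg (abs_nonneg z) ht₀.le
  have hac : a * Real.cosh t₀ < r := by
    rw [ha, div_mul_eq_mul_div, div_lt_iff₀ ht₀]; linarith
  have har : a < r := lt_of_le_of_lt (le_mul_of_one_le_right ha0 hc1) hac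
  rcases eq_or_ne z 0 with hz | hz
  · exact ⟨r, by simpa [hz, ha] using hr0, by simp [hz, hr0.ne']⟩
  · have ha0' : 0 < a := div_pos (abs_pos.mpr hz) ht₀
    have hcont : ContinuousOn (fun l => l * Real.cosh (z / l)) (Icc a r) := by
      refine continuousOn_id.mul (Real.continuous_cosh.comp_continuousOn
        (continuousOn_const.div continuousOn_id (fun l hl => ?_)))
      exact (lt_of_lt_of_le ha0' hl.1).ne'
    have hFa : a * Real.cosh (z / a) = a * Real.cosh t₀ := by
      have : |z / a| = t₀ := by
        rw [abs_div, abs_of_pos ha0', ha]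
        field_simp
      rw [← Real.cosh_abs, this]
    have hFr : r ≤ r * Real.cosh (z / r) :=
      le_mul_of_one_le_right hr0.le (Real.one_le_cosh _)
    have hmem : r ∈ Icc ((fun l => l * Real.cosh (z / l)) a)
        ((fun l => l * Real.cosh (z / l)) r) := by
      constructor
      · simp only; rw [hFa]; exact hac.le
      · exact hFr
    obtain ⟨l, hl, hFl⟩ := intermediate_value_Icc har.le hcont hmem
    refine ⟨l, ?_, hFl⟩
    rcases eq_or_lt_of_le hl.1 with h | h
    · exfalso
      rw [← h] at hFl
      simp only at hFl
      rw [hFa] at hFl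
      linarith
    · exact h

lemma mem_smul_iff {t₀ l : ℝ} (hl : 0 < l) (x : R3) :
    x ∈ l • Cat0 t₀ ↔
      (l * Real.cosh (x 2 / l)) ^ 2 = x 0 ^ 2 + x 1 ^ 2 ∧ |x 2| < l * t₀ := by
  rw [Set.mem_smul_set_iff_inv_smul_mem₀ hl.ne']
  simp only [Cat0, Set.mem_setOf_eq, PiLp.smul_apply, smul_eq_mul]
  have hl0 : l ≠ 0 := hl.ne'
  constructor
  · rintro ⟨h1, h2⟩
    constructor
    · rw [inv_mul_eq_div] at h1
      field_simp at h1 ⊢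
      nlinarith [h1]
    · rw [abs_mul, abs_inv, abs_of_pos hl, inv_mul_eq_div, div_lt_iff₀ hl] at h2
      linarith
  · rintro ⟨h1, h2⟩
    constructor
    · rw [inv_mul_eq_div]
      field_simp at h1 ⊢
      nlinarith [h1]
    · rw [abs_mul, abs_inv, abs_of_pos hl, inv_mul_eq_div, div_lt_iff₀ hl]
      linarith

lemma mem_cone_iff {t₀ : ℝ} (ht₀ : 0 < t₀) (x : R3) :
    x ∈ solidCone t₀ ↔
      (x 2) ^ 2 * Real.cosh t₀ ^ 2 < (x 0 ^ 2 + x 1 ^ 2) * t₀ ^ 2 := by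
  have hx := norm_sq3 x
  have hden : (0 : ℝ) < t₀ ^ 2 + Real.cosh t₀ ^ 2 := by positivity
  simp only [solidCone, Set.mem_setOf_eq]
  constructor
  · rintro ⟨-, h⟩
    rw [hx, ← mul_div_assoc, lt_div_iff₀ hden] at h
    nlinarith
  · intro h
    have hr2 : 0 < x 0 ^ 2 + x 1 ^ 2 := by nlinarith [sq_nonneg (x 2 * Real.cosh t₀)]
    refine ⟨?_, ?_⟩
    · intro h0
      rw [h0] at hr2
      simp at hr2
    · rw [hx, ← mul_div_assoc, lt_div_iff₀ hden]
      nlinarith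

/-- The dilations `λ • Cat₀`, `λ > 0`, are pairwise disjoint and their union is the open
solid cone `N_{θ₀}`; consequently there is a well-defined function `f : N_{θ₀} → (0,∞)`
with `f(x)⁻¹ • x ∈ Cat₀`, homogeneous of degree one. -/
theorem stmt5 (t₀ : ℝ) (ht₀ : 0 < t₀) (heq : Real.cosh t₀ = t₀ * Real.sinh t₀) :
    (∀ l m : ℝ, 0 < l → 0 < m → l ≠ m → Disjoint (l • Cat0 t₀) (m • Cat0 t₀)) ∧
    (⋃ l ∈ Ioi (0 : ℝ), l • Cat0 t₀) = solidCone t₀ ∧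
    ∃ f : R3 → ℝ, ∀ x ∈ solidCone t₀,
      0 < f x ∧ (f x)⁻¹ • x ∈ Cat0 t₀ ∧ ∀ l : ℝ, 0 < l → f (l • x) = l * f x := by
  classical
  -- uniqueness of the dilation factor
  have huniq : ∀ (x : R3) (l m : ℝ), 0 < l → 0 < m →
      x ∈ l • Cat0 t₀ → x ∈ m • Cat0 t₀ → l = m := by
    intro x l m hl hm hxl hxm
    obtain ⟨hl1, hl2⟩ := (mem_smul_iff hl x).mp hxl
    obtain ⟨hm1, hm2⟩ := (mem_smul_iff hm x).mp hxm
    set z := x 2 with hz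
    have hFl : l * Real.cosh (z / l) = m * Real.cosh (z / m) := by
      have h1 : 0 ≤ l * Real.cosh (z / l) := by positivity
      have h2 : 0 ≤ m * Real.cosh (z / m) := by positivity
      have : (l * Real.cosh (z / l)) ^ 2 = (m * Real.cosh (z / m)) ^ 2 := by
        rw [hl1, hm1]
      rw [← Real.sqrt_sq h1, ← Real.sqrt_sq h2, this]
    have hla : |z| / t₀ < l := by rw [div_lt_iff₀ ht₀]; linarith [hl2]
    have hma : |z| / t₀ < m := by rw [div_lt_iff₀ ht₀]; linarith [hm2]
    exact (F_strictMono ht₀ heq z).injOn hla hma hFl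
  -- each dilate lies in the cone
  have hsub : ∀ (x : R3) (l : ℝ), 0 < l → x ∈ l • Cat0 t₀ → x ∈ solidCone t₀ := by
    intro x l hl hxl
    obtain ⟨h1, h2⟩ := (mem_smul_iff hl x).mp hxl
    rw [mem_cone_iff ht₀]
    set z := x 2 with hz
    have hs0 : 0 ≤ |z| / l := div_nonneg (abs_nonneg z) hl.le
    have hst : |z| / l < t₀ := by rw [div_lt_iff₀ hl]; linarith
    have hk := key1 heq hst
    have hcosh : Real.cosh (z / l) = Real.cosh (|z| / l) := by
      rw [← Real.cosh_abs (z / l), abs_div, abs_of_pos hl]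
    have hlt : |z| * Real.cosh t₀ < l * t₀ * Real.cosh (z / l) := by
      rw [hcosh, heq]
      have : |z| * (t₀ * Real.sinh t₀) = l * t₀ * ((|z| / l) * Real.sinh t₀) := by
        field_simp
      rw [this]
      have hlt₀ : 0 < l * t₀ := mul_pos hl ht₀
      exact (mul_lt_mul_iff_right₀ hlt₀).mpr hk
    have hsq : (|z| * Real.cosh t₀) ^ 2 < (l * t₀ * Real.cosh (z / l)) ^ 2 :=
      pow_lt_pow_left₀ hlt (by positivity) (by norm_num)
    calc z ^ 2 * Real.cosh t₀ ^ 2 = (|z| * Real.cosh t₀) ^ 2 := by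
          rw [mul_pow, sq_abs]
      _ < (l * t₀ * Real.cosh (z / l)) ^ 2 := hsq
      _ = (x 0 ^ 2 + x 1 ^ 2) * t₀ ^ 2 := by rw [← h1]; ring
  -- existence of a dilation factor for each cone point
  have hexists : ∀ x ∈ solidCone t₀, ∃ l : ℝ, 0 < l ∧ x ∈ l • Cat0 t₀ := by
    intro x hx
    rw [mem_cone_iff ht₀] at hx
    set z := x 2 with hz
    set r := Real.sqrt (x 0 ^ 2 + x 1 ^ 2) with hr
    have hr2 : r ^ 2 = x 0 ^ 2 + x 1 ^ 2 := Real.sq_sqrt (by positivity)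
    have habs : |z| * Real.cosh t₀ < r * t₀ := by
      apply lt_of_pow_lt_pow_left₀ 2 (by positivity)
      calc (|z| * Real.cosh t₀) ^ 2 = z ^ 2 * Real.cosh t₀ ^ 2 := by
            rw [mul_pow, sq_abs]
        _ < (x 0 ^ 2 + x 1 ^ 2) * t₀ ^ 2 := hx
        _ = (r * t₀) ^ 2 := by rw [mul_pow, hr2]
    obtain ⟨l, hla, hFl⟩ := F_exists ht₀ habs
    have hl0 : 0 < l := lt_of_le_of_lt (div_nonneg (abs_nonneg z) ht₀.le) hla
    refine ⟨l, hl0, (mem_smul_iff hl0 x).mpr ⟨?_, ?_⟩⟩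
    · rw [hFl, hr2]
    · rw [div_lt_iff₀ ht₀] at hla
      linarith
  refine ⟨?_, ?_, ?_⟩
  · intro l m hl hm hne
    rw [Set.disjoint_left]
    intro x hxl hxm
    exact hne (huniq x l m hl hm hxl hxm)
  · ext x
    simp only [mem_iUnion, mem_Ioi, exists_prop]
    constructor
    · rintro ⟨l, hl, hxl⟩
      exact hsub x l hl hxl
    · exact hexists x
  · refine ⟨fun x => if h : ∃ l : ℝ, 0 < l ∧ x ∈ l • Cat0 t₀ then h.choose else 1, ?_⟩
    intro x hx
    have hex : ∃ l : ℝ, 0 < l ∧ x ∈ l • Cat0 t₀ := hexists x hx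
    simp only [dif_pos hex]
    obtain ⟨hpos, hmem⟩ := hex.choose_spec
    refine ⟨hpos, ?_, ?_⟩
    · exact (Set.mem_smul_set_iff_inv_smul_mem₀ hpos.ne' _ _).mp hmem
    · intro l hl
      have hmem' : l • x ∈ (l * hex.choose) • Cat0 t₀ := by
        rw [← smul_eq_mul, smul_assoc]
        exact Set.smul_mem_smul_set hmem
      have hex' : ∃ m : ℝ, 0 < m ∧ l • x ∈ m • Cat0 t₀ :=
        ⟨l * hex.choose, mul_pos hl hpos, hmem'⟩
      simp only [dif_pos hex']
      obtain ⟨hpos', hmem''⟩ := hex'.choose_spec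
      exact huniq (l • x) _ _ hpos' (mul_pos hl hpos) hmem'' hmem'
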